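/- For orthogonal projections P and Q on a complex Hilbert space, the geometric mean P # Q equals the projection P ∧ Q onto the intersection ran(P) ∩ ran(Q), and the harmonic mean P ! Q = 2(P : Q) also equals P ∧ Q. -/

import Mathlib

open Filter Topology

variable {H : Type*} [NormedAddCommGroup H] [InnerProductSpace ℂ H] [CompleteSpace H]

/-- The square root of a (positive) bounded operator, via the continuous functional
calculus. -/
noncomputable def opSqrt (A : H →L[ℂ] H) : H →L[ℂ] H := cfc Real.sqrt A

/-- The geometric mean `A # B = A^{1/2}(A^{-1/2} B A^{-1/2})^{1/2} A^{1/2}` of invertible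
positive operators. -/
noncomputable def gmInv (A B : H →L[ℂ] H) : H →L[ℂ] H :=
  opSqrt A * opSqrt (Ring.inverse (opSqrt A) * B * Ring.inverse (opSqrt A)) * opSqrt A

/-- The parallel sum `(A⁻¹ + B⁻¹)⁻¹` of invertible positive operators. -/
noncomputable def psInv (A B : H →L[ℂ] H) : H →L[ℂ] H :=
  Ring.inverse (Ring.inverse A + Ring.inverse B)

set_option maxHeartbeats 1000000
set_option synthInstance.maxHeartbeats 400000

local notation "⟪" x ", " y "⟫" => @inner ℂ _ _ x y
local notation "rre" => RCLike.re (K := ℂ)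

section Generic
variable {M : Type*} [Monoid M]

lemma aux_isUnit_of_mul (a b c : M) (h1 : a * b = 1) (h2 : c * a = 1) : IsUnit a := by
  have hbc : b = c := by
    calc b = 1 * b := (one_mul b).symm
    _ = c * a * b := by rw [h2]
    _ = c * (a * b) := mul_assoc _ _ _
    _ = c := by rw [h1, mul_one]
  exact ⟨⟨a, b, h1, hbc ▸ h2⟩, rfl⟩

end Generic

lemma aux_inverse_eq {M : Type*} [MonoidWithZero M] {a y : M} (ha : IsUnit a) (h : a * y = 1) :
    Ring.inverse a = y := by
  calc Ring.inverse a = Ring.inverse a * (a * y) := by rw [h, mul_one]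
  _ = Ring.inverse a * a * y := (mul_assoc _ _ _).symm
  _ = y := by rw [Ring.inverse_mul_cancel a ha, one_mul]

lemma aux_real_smul (b : ℝ) (v : H) : b • v = (b : ℂ) • v :=
  RCLike.real_smul_eq_coe_smul (K := ℂ) b v

/-- self-adjoint operators move across the inner product -/
lemma aux_re_ofReal_mul (c : ℝ) (z : ℂ) : rre ((c:ℂ) * z) = c * rre z := by
  show ((c:ℂ) * z).re = c * z.re
  simp

lemma aux_sa_inner {A : H →L[ℂ] H} (hA : IsSelfAdjoint A) (x y : H) :
    ⟪A x, y⟫ = ⟪x, A y⟫ := by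
  conv_lhs => rw [← (ContinuousLinearMap.isSelfAdjoint_iff'.mp hA)]
  exact ContinuousLinearMap.adjoint_inner_left A y x

lemma aux_nonneg_inner {T : H →L[ℂ] H} (hT : 0 ≤ T) (x : H) :
    0 ≤ rre ⟪T x, x⟫ :=
  ((ContinuousLinearMap.nonneg_iff_isPositive T).mp hT).re_inner_nonneg_left x

lemma aux_le_inner {T T' : H →L[ℂ] H} (h : T ≤ T') (x : H) :
    rre ⟪T x, x⟫ ≤ rre ⟪T' x, x⟫ := by
  have := aux_nonneg_inner (T := T' - T) (sub_nonneg.mpr h) x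
  rw [ContinuousLinearMap.sub_apply, inner_sub_left] at this
  rw [map_sub] at this
  linarith

lemma aux_smul_nonneg {T : H →L[ℂ] H} (hT : 0 ≤ T) {c : ℝ} (hc : 0 ≤ c) : 0 ≤ c • T := by
  rw [ContinuousLinearMap.nonneg_iff_isPositive, ContinuousLinearMap.isPositive_def'] at hT ⊢
  refine ⟨?_, fun x => ?_⟩
  · rw [IsSelfAdjoint, star_smul, star_trivial, hT.1.star_eq]
  · have := hT.2 x
    rw [ContinuousLinearMap.reApplyInnerSelf] at this ⊢
    rw [ContinuousLinearMap.smul_apply, aux_real_smul, inner_smul_left, Complex.conj_ofReal,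
      aux_re_ofReal_mul]
    exact mul_nonneg hc this

/-- eigenvector lemma: positive operator with `X² ξ = b² ξ` satisfies `X ξ = b ξ`. -/
lemma aux_eigen {X : H →L[ℂ] H} (hX : 0 ≤ X) {b : ℝ} (hb : 0 < b) {ξ : H}
    (h : X (X ξ) = (b ^ 2 : ℝ) • ξ) : X ξ = b • ξ := by
  set v := X ξ - b • ξ with hv
  have hXv : X v = -(b • v) := by
    rw [hv, map_sub, h, aux_real_smul, aux_real_smul, map_smul, aux_real_smul]
    push_cast
    module
  have h0 : 0 ≤ rre ⟪X v, v⟫ := aux_nonneg_inner hX v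
  rw [hXv, inner_neg_left, aux_real_smul, inner_smul_left, Complex.conj_ofReal] at h0
  rw [map_neg, aux_re_ofReal_mul] at h0
  have h1 : rre ⟪v,v⟫ = ‖v‖ ^ 2 := inner_self_eq_norm_sq v
  rw [h1] at h0
  have : v = 0 := by
    by_contra hne
    have hpos : 0 < ‖v‖ := norm_pos_iff.mpr hne
    nlinarith [mul_pos hb (mul_pos hpos hpos)]
  rw [hv, sub_eq_zero] at this
  exact this

/-! ### square root lemmas -/

lemma opSqrt_isSelfAdjoint {A : H →L[ℂ] H} (hA : IsSelfAdjoint A) :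
    IsSelfAdjoint (opSqrt A) := cfc_predicate _ _

lemma opSqrt_nonneg {A : H →L[ℂ] H} : 0 ≤ opSqrt A :=
  cfc_nonneg fun x _ => Real.sqrt_nonneg x

lemma opSqrt_mul_self {A : H →L[ℂ] H} (hA : 0 ≤ A) : opSqrt A * opSqrt A = A := by
  have h1 : cfc (fun x => Real.sqrt x * Real.sqrt x) A = cfc (id : ℝ → ℝ) A :=
    cfc_congr (fun x hx => Real.mul_self_sqrt (spectrum_nonneg_of_nonneg hA hx))
  rw [opSqrt, ← cfc_mul Real.sqrt Real.sqrt A, h1]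
  exact cfc_id ℝ A

lemma opSqrt_isUnit {A : H →L[ℂ] H} (hA : 0 ≤ A) (hu : IsUnit A) : IsUnit (opSqrt A) := by
  have h2 := opSqrt_mul_self hA
  refine aux_isUnit_of_mul (opSqrt A) (opSqrt A * Ring.inverse A) (Ring.inverse A * opSqrt A)
    ?_ ?_
  · rw [← mul_assoc, h2, Ring.mul_inverse_cancel A hu]
  · rw [mul_assoc, h2, Ring.inverse_mul_cancel A hu]

lemma aux_inv_sq {A : H →L[ℂ] H} (hA : 0 ≤ A) :
    Ring.inverse A = Ring.inverse (opSqrt A) * Ring.inverse (opSqrt A) := by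
  conv_lhs => rw [← opSqrt_mul_self hA]
  exact Ring.mul_inverse_rev' (Commute.refl _)

lemma aux_inverse_star_self {A : H →L[ℂ] H} (hA : IsSelfAdjoint A) :
    star (Ring.inverse A) = Ring.inverse A := by
  rw [← Ring.inverse_star, hA.star_eq]

lemma aux_inverse_isSelfAdjoint {A : H →L[ℂ] H} (hA : IsSelfAdjoint A) :
    IsSelfAdjoint (Ring.inverse A) := aux_inverse_star_self hA

lemma aux_inverse_nonneg {A : H →L[ℂ] H} (hA : 0 ≤ A) (hsa : IsSelfAdjoint A) (hu : IsUnit A) :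
    0 ≤ Ring.inverse A := by
  have h := star_left_conjugate_nonneg hA (Ring.inverse A)
  rwa [aux_inverse_star_self hsa, Ring.inverse_mul_cancel A hu, one_mul] at h

lemma aux_isUnit_of_le {D : H →L[ℂ] H} {c : ℝ} (hc : 0 < c) (hle : c • 1 ≤ D) : IsUnit D := by
  refine ContinuousLinearMap.isUnit_of_forall_le_norm_inner_map D (c := ⟨c, hc.le⟩)
    (by exact_mod_cast hc) fun x => ?_
  have h1 : c * ‖x‖ ^ 2 ≤ rre ⟪D x, x⟫ := by
    have h := aux_le_inner hle x
    rwa [ContinuousLinearMap.smul_apply, ContinuousLinearMap.one_apply, aux_real_smul,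
      inner_smul_left, Complex.conj_ofReal, aux_re_ofReal_mul, inner_self_eq_norm_sq] at h
  calc ‖x‖ ^ 2 * (⟨c, hc.le⟩ : NNReal) = c * ‖x‖ ^ 2 := by push_cast; ring
  _ ≤ rre ⟪D x, x⟫ := h1
  _ ≤ ‖⟪D x, x⟫‖ := le_trans (le_abs_self _) (RCLike.abs_re_le_norm _)

lemma aux_inverse_lower {B : H →L[ℂ] H} (hB0 : 0 ≤ B) (hBsa : IsSelfAdjoint B)
    (hBu : IsUnit B) {c : ℝ} (hc : 0 < c) (hle : B ≤ c • 1) :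
    c⁻¹ • (1 : H →L[ℂ] H) ≤ Ring.inverse B := by
  set Z := opSqrt B with hZ
  have hZsa : IsSelfAdjoint Z := opSqrt_isSelfAdjoint hBsa
  have hZZ : Z * Z = B := opSqrt_mul_self hB0
  have hZu : IsUnit Z := opSqrt_isUnit hB0 hBu
  have hstar : star (Ring.inverse Z) = Ring.inverse Z := aux_inverse_star_self hZsa
  have h1mB : 0 ≤ (1 : H →L[ℂ] H) - c⁻¹ • B := by
    have h0 : 0 ≤ c • (1 : H →L[ℂ] H) - B := sub_nonneg.mpr hle
    have := aux_smul_nonneg h0 (inv_nonneg.mpr hc.le)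
    rwa [smul_sub, smul_smul, inv_mul_cancel₀ hc.ne', one_smul] at this
  have hconj := star_left_conjugate_nonneg h1mB (Ring.inverse Z)
  rw [hstar] at hconj
  have hkey : Ring.inverse Z * ((1 : H →L[ℂ] H) - c⁻¹ • B) * Ring.inverse Z
      = Ring.inverse B - c⁻¹ • (1 : H →L[ℂ] H) := by
    have hZBZ : Ring.inverse Z * B * Ring.inverse Z = 1 := by
      rw [← hZZ, ← mul_assoc, mul_assoc (Ring.inverse Z * Z),
        Ring.inverse_mul_cancel Z hZu, one_mul, Ring.mul_inverse_cancel Z hZu]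
    rw [mul_sub, sub_mul, mul_one, mul_smul_comm, smul_mul_assoc, hZBZ, ← aux_inv_sq hB0]
  rw [hkey] at hconj
  exact sub_nonneg.mp hconj

/-! ### projection and misc lemmas -/

lemma aux_nonneg_sa {T : H →L[ℂ] H} (h : 0 ≤ T) : IsSelfAdjoint T :=
  ((ContinuousLinearMap.nonneg_iff_isPositive T).mp h).isSelfAdjoint

lemma aux_null {T : H →L[ℂ] H} (hT : 0 ≤ T) {η : H} (h : rre ⟪T η, η⟫ = 0) : T η = 0 := by
  set Y := opSqrt T with hY
  have hYsa : IsSelfAdjoint Y := opSqrt_isSelfAdjoint (aux_nonneg_sa hT)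
  have hYY : Y * Y = T := opSqrt_mul_self hT
  have hTη : T η = Y (Y η) := by rw [← hYY]; rfl
  have h2 : rre ⟪Y (Y η), η⟫ = ‖Y η‖ ^ 2 := by
    rw [aux_sa_inner hYsa (Y η) η]
    rw [← inner_self_eq_norm_sq (𝕜 := ℂ) (Y η), inner_re_symm]
  rw [hTη, h2] at h
  have : Y η = 0 := by
    have := sq_eq_zero_iff.mp h
    exact norm_eq_zero.mp this
  rw [hTη, this, map_zero]

lemma aux_inv_eigen {T : H →L[ℂ] H} (hTu : IsUnit T) {d : ℝ} (hd : d ≠ 0) {ξ : H}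
    (h : T ξ = d • ξ) : Ring.inverse T ξ = d⁻¹ • ξ := by
  have h3 : (Ring.inverse T) (T ξ) = ξ := by
    have h4 : (Ring.inverse T * T) ξ = (1 : H →L[ℂ] H) ξ := by
      rw [Ring.inverse_mul_cancel T hTu]
    simpa using h4
  have h2 : d • Ring.inverse T ξ = ξ := by
    calc d • Ring.inverse T ξ = Ring.inverse T (d • ξ) := by
          rw [aux_real_smul d (Ring.inverse T ξ), aux_real_smul d ξ, map_smul]
      _ = Ring.inverse T (T ξ) := by rw [h]
      _ = ξ := h3
  have h5 := congrArg (fun v => (d⁻¹ : ℝ) • v) h2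
  simpa [smul_smul, inv_mul_cancel₀ hd] using h5

section Proj
variable {P : H →L[ℂ] H} (hPsa : IsSelfAdjoint P) (hPidem : IsIdempotentElem P)
include hPsa hPidem

lemma aux_proj_nonneg : 0 ≤ P := by
  have := star_mul_self_nonneg P
  rwa [hPsa.star_eq, hPidem.eq] at this

lemma aux_proj_le_one : P ≤ 1 := by
  have h1 : IsSelfAdjoint (1 - P) := ((IsSelfAdjoint.one (H →L[ℂ] H))).sub hPsa
  have h2 : IsIdempotentElem (1 - P) := hPidem.one_sub
  have := aux_proj_nonneg h1 h2
  exact sub_nonneg.mp this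

lemma aux_proj_inner (x : H) : rre ⟪P x, x⟫ = ‖P x‖ ^ 2 := by
  conv_lhs => rw [show P x = P (P x) by rw [← ContinuousLinearMap.mul_apply, hPidem.eq]]
  rw [aux_sa_inner hPsa (P x) x, inner_re_symm, inner_self_eq_norm_sq]

lemma aux_proj_fix {x : H} (hx : x ∈ LinearMap.range (P : H →ₗ[ℂ] H)) : P x = x := by
  obtain ⟨y, hy⟩ := hx
  have hy' : P y = x := hy
  have h2 : P (P y) = P y := by rw [← ContinuousLinearMap.mul_apply, hPidem.eq]
  rw [hy'] at h2
  exact h2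

end Proj

section Shifted
variable {P : H →L[ℂ] H} (hPsa : IsSelfAdjoint P) (hPidem : IsIdempotentElem P)
  {ε : ℝ} (hε : 0 < ε)

lemma aux_smul_one_sa : IsSelfAdjoint (ε • (1 : H →L[ℂ] H)) := by
  have : star (ε • (1 : H →L[ℂ] H)) = ε • (1 : H →L[ℂ] H) := by
    rw [star_smul, star_trivial, star_one]
  exact this

include hPsa in
lemma aux_shift_sa : IsSelfAdjoint (P + ε • 1) := hPsa.add aux_smul_one_sa

include hPsa hPidem hε

lemma aux_shift_lower : ε • (1 : H →L[ℂ] H) ≤ P + ε • 1 := by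
  have : (P + ε • 1) - ε • 1 = P := by abel
  rw [← sub_nonneg, this]
  exact aux_proj_nonneg hPsa hPidem

lemma aux_shift_nonneg : 0 ≤ P + ε • 1 := by
  refine le_trans ?_ (aux_shift_lower hPsa hPidem hε)
  have h01 : (0 : H →L[ℂ] H) ≤ 1 := by simpa using star_mul_self_nonneg (1 : H →L[ℂ] H)
  exact aux_smul_nonneg h01 hε.le

lemma aux_shift_unit : IsUnit (P + ε • 1) :=
  aux_isUnit_of_le hε (aux_shift_lower hPsa hPidem hε)

lemma aux_shift_upper : P + ε • 1 ≤ (1 + ε) • (1 : H →L[ℂ] H) := by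
  rw [← sub_nonneg]
  have : (1 + ε) • (1 : H →L[ℂ] H) - (P + ε • 1) = 1 - P := by
    rw [add_smul, one_smul]; abel
  rw [this]
  exact aux_proj_nonneg (((IsSelfAdjoint.one (H →L[ℂ] H))).sub hPsa) hPidem.one_sub

lemma aux_shift_eigen {ξ : H} (hξ : P ξ = ξ) : (P + ε • 1) ξ = (1 + ε) • ξ := by
  rw [ContinuousLinearMap.add_apply, ContinuousLinearMap.smul_apply,
    ContinuousLinearMap.one_apply, hξ, add_smul, one_smul]

lemma aux_shift_inner (x : H) :
    rre ⟪(P + ε • 1) x, x⟫ = ‖P x‖ ^ 2 + ε * ‖x‖ ^ 2 := by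
  rw [ContinuousLinearMap.add_apply, inner_add_left, map_add, aux_proj_inner hPsa hPidem,
    ContinuousLinearMap.smul_apply, ContinuousLinearMap.one_apply, aux_real_smul,
    inner_smul_left, Complex.conj_ofReal, aux_re_ofReal_mul, inner_self_eq_norm_sq]

end Shifted

section GM

variable {A B : H →L[ℂ] H} (hAsa : IsSelfAdjoint A) (hA0 : 0 ≤ A) (hAu : IsUnit A)
  (hBsa : IsSelfAdjoint B) (hB0 : 0 ≤ B) (hBu : IsUnit B)

include hAsa hA0 hAu hBsa hB0 hBu

lemma aux_M_nonneg : 0 ≤ Ring.inverse (opSqrt A) * B * Ring.inverse (opSqrt A) := by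
  have h := star_left_conjugate_nonneg hB0 (Ring.inverse (opSqrt A))
  rwa [aux_inverse_star_self (opSqrt_isSelfAdjoint (aux_nonneg_sa hA0))] at h

lemma aux_M_unit : IsUnit (Ring.inverse (opSqrt A) * B * Ring.inverse (opSqrt A)) := by
  have hXu : IsUnit (opSqrt A) := opSqrt_isUnit hA0 hAu
  exact (hXu.ringInverse.mul hBu).mul hXu.ringInverse

lemma gmInv_isSelfAdjoint : IsSelfAdjoint (gmInv A B) := by
  set X := opSqrt A
  set Y := opSqrt (Ring.inverse X * B * Ring.inverse X)
  have hXsa : IsSelfAdjoint X := opSqrt_isSelfAdjoint (aux_nonneg_sa hA0)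
  have hYsa : IsSelfAdjoint Y :=
    opSqrt_isSelfAdjoint (aux_nonneg_sa (aux_M_nonneg hAsa hA0 hAu hBsa hB0 hBu))
  have : star (X * Y * X) = X * Y * X := by
    rw [star_mul, star_mul, hXsa.star_eq, hYsa.star_eq, mul_assoc]
  exact this

/-- first Riccati-type identity : `T A⁻¹ T = B`. -/
lemma gmInv_inv_left : gmInv A B * Ring.inverse A * gmInv A B = B := by
  set X := opSqrt A with hX
  set M := Ring.inverse X * B * Ring.inverse X with hM
  set Y := opSqrt M with hYdef
  have hXu : IsUnit X := opSqrt_isUnit hA0 hAu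
  have hM0 : 0 ≤ M := aux_M_nonneg hAsa hA0 hAu hBsa hB0 hBu
  have hYY : Y * Y = M := opSqrt_mul_self hM0
  have hiA : Ring.inverse A = Ring.inverse X * Ring.inverse X := aux_inv_sq hA0
  rw [gmInv, ← hX, ← hM, ← hYdef, hiA]
  simp only [mul_assoc]
  rw [Ring.mul_inverse_cancel_left X _ hXu, Ring.inverse_mul_cancel_left X _ hXu,
    ← mul_assoc Y Y X, hYY, hM]
  simp only [mul_assoc]
  rw [Ring.inverse_mul_cancel X hXu, mul_one, Ring.mul_inverse_cancel_left X B hXu]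

/-- second Riccati-type identity : `T B⁻¹ T = A`. -/
lemma gmInv_inv_right : gmInv A B * Ring.inverse B * gmInv A B = A := by
  set X := opSqrt A with hX
  set M := Ring.inverse X * B * Ring.inverse X with hM
  set Y := opSqrt M with hYdef
  have hXu : IsUnit X := opSqrt_isUnit hA0 hAu
  have hM0 : 0 ≤ M := aux_M_nonneg hAsa hA0 hAu hBsa hB0 hBu
  have hMu : IsUnit M := aux_M_unit hAsa hA0 hAu hBsa hB0 hBu
  have hYY : Y * Y = M := opSqrt_mul_self hM0
  have hXX : X * X = A := opSqrt_mul_self hA0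
  -- X * B⁻¹ * X  is the inverse of M
  have hMinv : Ring.inverse M = X * Ring.inverse B * X := by
    refine aux_inverse_eq hMu ?_
    rw [hM]
    simp only [mul_assoc]
    rw [Ring.inverse_mul_cancel_left X _ hXu, Ring.mul_inverse_cancel_left B _ hBu,
      Ring.inverse_mul_cancel X hXu]
  -- Y commutes with M and with M⁻¹
  have hYM : Y * M = M * Y := by rw [← hYY, mul_assoc, ← mul_assoc]
  have hYMinv : Y * Ring.inverse M = Ring.inverse M * Y := by
    have h1 : Ring.inverse M * (M * Y) * Ring.inverse M = Y * Ring.inverse M := by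
      rw [Ring.inverse_mul_cancel_left M Y hMu]
    calc Y * Ring.inverse M = Ring.inverse M * (M * Y) * Ring.inverse M := h1.symm
      _ = Ring.inverse M * (Y * M) * Ring.inverse M := by rw [hYM]
      _ = Ring.inverse M * (Y * (M * Ring.inverse M)) := by simp only [mul_assoc]
      _ = Ring.inverse M * Y := by rw [Ring.mul_inverse_cancel M hMu, mul_one]
  rw [gmInv, ← hX, ← hM, ← hYdef]
  calc X * Y * X * Ring.inverse B * (X * Y * X)
      = X * Y * (X * (Ring.inverse B * X)) * (Y * X) := by simp only [mul_assoc]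
    _ = X * Y * Ring.inverse M * (Y * X) := by rw [hMinv]; simp only [mul_assoc]
    _ = X * (Y * Ring.inverse M * Y) * X := by simp only [mul_assoc]
    _ = X * (Ring.inverse M * Y * Y) * X := by rw [hYMinv]
    _ = X * (Ring.inverse M * M) * X := by rw [mul_assoc (Ring.inverse M), hYY]
    _ = X * X := by rw [Ring.inverse_mul_cancel M hMu, mul_one]
    _ = A := hXX

end GM

section GM2

variable {A B : H →L[ℂ] H} (hAsa : IsSelfAdjoint A) (hA0 : 0 ≤ A) (hAu : IsUnit A)
  (hBsa : IsSelfAdjoint B) (hB0 : 0 ≤ B) (hBu : IsUnit B)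

include hAsa hA0 hAu hBsa hB0 hBu

/-- eigenvector computation for the geometric mean. -/
lemma gmInv_eigen {c : ℝ} (hc : 0 < c) {ξ : H}
    (hAx : A ξ = (c ^ 2 : ℝ) • ξ) (hBx : B ξ = (c ^ 2 : ℝ) • ξ) :
    gmInv A B ξ = (c ^ 2 : ℝ) • ξ := by
  set X := opSqrt A with hX
  set M := Ring.inverse X * B * Ring.inverse X with hM
  set Y := opSqrt M with hYdef
  have hXu : IsUnit X := opSqrt_isUnit hA0 hAu
  have hM0 : 0 ≤ M := aux_M_nonneg hAsa hA0 hAu hBsa hB0 hBu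
  have hXX : X * X = A := opSqrt_mul_self hA0
  have hYY : Y * Y = M := opSqrt_mul_self hM0
  -- X ξ = c • ξ
  have hXξ : X ξ = c • ξ := by
    refine aux_eigen opSqrt_nonneg hc ?_
    have : (X * X) ξ = A ξ := by rw [hXX]
    rw [ContinuousLinearMap.mul_apply] at this
    rw [this, hAx]
  have hiXξ : Ring.inverse X ξ = c⁻¹ • ξ := aux_inv_eigen hXu hc.ne' hXξ
  -- M ξ = ξ
  have hMξ : M ξ = ξ := by
    rw [hM, ContinuousLinearMap.mul_apply, ContinuousLinearMap.mul_apply, hiXξ]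
    rw [aux_real_smul, map_smul, map_smul, ← aux_real_smul, hBx]
    rw [aux_real_smul (c^2) ξ, map_smul, ← aux_real_smul, hiXξ]
    rw [smul_smul, smul_smul]
    have h9 : c⁻¹ * c ^ 2 * c⁻¹ = 1 := by
      rw [sq]
      field_simp
    rw [h9, one_smul]
  -- Y ξ = ξ
  have hYξ : Y ξ = ξ := by
    have h1 : Y (Y ξ) = ((1:ℝ) ^ 2 : ℝ) • ξ := by
      have : (Y * Y) ξ = M ξ := by rw [hYY]
      rw [ContinuousLinearMap.mul_apply] at this
      rw [this, hMξ]
      norm_num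
    have := aux_eigen opSqrt_nonneg one_pos h1
    simpa using this
  -- assemble
  rw [gmInv, ← hX, ← hM, ← hYdef, ContinuousLinearMap.mul_apply,
    ContinuousLinearMap.mul_apply, hXξ, aux_real_smul c ξ, map_smul, map_smul, hYξ, hXξ,
    aux_real_smul c ξ, smul_smul, aux_real_smul (c ^ 2) ξ]
  congr 1
  push_cast
  ring

/-- norm bound for the geometric mean, first form (bound by `A`, using `B ≤ c•1`). -/
lemma gmInv_norm_bound_left {c : ℝ} (hc : 0 < c) (hle : B ≤ c • 1) (η : H) :
    ‖gmInv A B η‖ ^ 2 ≤ c * rre ⟪A η, η⟫ := by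
  have hTsa : IsSelfAdjoint (gmInv A B) := gmInv_isSelfAdjoint hAsa hA0 hAu hBsa hB0 hBu
  have hid := gmInv_inv_right hAsa hA0 hAu hBsa hB0 hBu
  set T := gmInv A B with hT
  have hlow := aux_inverse_lower hB0 hBsa hBu hc hle
  have h1 : rre ⟪A η, η⟫ = rre ⟪Ring.inverse B (T η), T η⟫ := by
    conv_lhs => rw [← hid]
    rw [ContinuousLinearMap.mul_apply, ContinuousLinearMap.mul_apply,
      aux_sa_inner hTsa (Ring.inverse B (T η)) η]
  have h2 : c⁻¹ * ‖T η‖ ^ 2 ≤ rre ⟪Ring.inverse B (T η), T η⟫ := by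
    have h := aux_le_inner hlow (T η)
    rwa [ContinuousLinearMap.smul_apply, ContinuousLinearMap.one_apply, aux_real_smul,
      inner_smul_left, Complex.conj_ofReal, aux_re_ofReal_mul, inner_self_eq_norm_sq] at h
  rw [h1]
  calc ‖T η‖ ^ 2 = c * (c⁻¹ * ‖T η‖ ^ 2) := by field_simp
  _ ≤ c * rre ⟪Ring.inverse B (T η), T η⟫ := by
      exact mul_le_mul_of_nonneg_left h2 hc.le

/-- norm bound for the geometric mean, second form (bound by `B`, using `A ≤ c•1`). -/
lemma gmInv_norm_bound_right {c : ℝ} (hc : 0 < c) (hle : A ≤ c • 1) (η : H) :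
    ‖gmInv A B η‖ ^ 2 ≤ c * rre ⟪B η, η⟫ := by
  have hTsa : IsSelfAdjoint (gmInv A B) := gmInv_isSelfAdjoint hAsa hA0 hAu hBsa hB0 hBu
  have hid := gmInv_inv_left hAsa hA0 hAu hBsa hB0 hBu
  set T := gmInv A B with hT
  have hlow := aux_inverse_lower hA0 hAsa hAu hc hle
  have h1 : rre ⟪B η, η⟫ = rre ⟪Ring.inverse A (T η), T η⟫ := by
    conv_lhs => rw [← hid]
    rw [ContinuousLinearMap.mul_apply, ContinuousLinearMap.mul_apply,
      aux_sa_inner hTsa (Ring.inverse A (T η)) η]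
  have h2 : c⁻¹ * ‖T η‖ ^ 2 ≤ rre ⟪Ring.inverse A (T η), T η⟫ := by
    have h := aux_le_inner hlow (T η)
    rwa [ContinuousLinearMap.smul_apply, ContinuousLinearMap.one_apply, aux_real_smul,
      inner_smul_left, Complex.conj_ofReal, aux_re_ofReal_mul, inner_self_eq_norm_sq] at h
  rw [h1]
  calc ‖T η‖ ^ 2 = c * (c⁻¹ * ‖T η‖ ^ 2) := by field_simp
  _ ≤ c * rre ⟪Ring.inverse A (T η), T η⟫ := by
      exact mul_le_mul_of_nonneg_left h2 hc.le

end GM2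

section PS

variable {A B : H →L[ℂ] H} (hAsa : IsSelfAdjoint A) (hA0 : 0 ≤ A) (hAu : IsUnit A)
  (hBsa : IsSelfAdjoint B) (hB0 : 0 ≤ B) (hBu : IsUnit B) (hFu : IsUnit (A + B))

include hAu hBu hFu in
lemma aux_ps_key : IsUnit (Ring.inverse A + Ring.inverse B) ∧
    psInv A B = A - A * Ring.inverse (A + B) * A := by
  set iA := Ring.inverse A with hiA
  set iB := Ring.inverse B with hiB
  set iF := Ring.inverse (A + B) with hiF
  have h1 : (A + B) * iB = A * iB + 1 := by rw [hiB, add_mul, Ring.mul_inverse_cancel B hBu]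
  have h2 : iF * (A * iB + 1) = iB := by rw [← h1, hiF, Ring.inverse_mul_cancel_left _ _ hFu]
  have h1' : iB * (A + B) = iB * A + 1 := by rw [hiB, mul_add, Ring.inverse_mul_cancel B hBu]
  have h2' : (iB * A + 1) * iF = iB := by
    rw [← h1', hiF, mul_assoc, Ring.mul_inverse_cancel _ hFu, mul_one]
  have hED : (A - A * iF * A) * (iA + iB) = 1 := by
    have e1 : (A - A * iF * A) * (iA + iB)
        = A * iA + A * iB - ((A * iF) * (A * iA) + (A * iF) * (A * iB)) := by noncomm_ring
    rw [e1, hiA, Ring.mul_inverse_cancel A hAu]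
    have e2 : 1 + A * iB - ((A * iF) * 1 + (A * iF) * (A * iB))
        = 1 + A * iB - A * (iF * (A * iB + 1)) := by noncomm_ring
    rw [e2, h2]
    noncomm_ring
  have hDE : (iA + iB) * (A - A * iF * A) = 1 := by
    have e1 : (iA + iB) * (A - A * iF * A)
        = iA * A + iB * A - ((iA * A) * (iF * A) + (iB * A) * (iF * A)) := by noncomm_ring
    rw [e1, hiA, Ring.inverse_mul_cancel A hAu]
    have e2 : 1 + iB * A - (1 * (iF * A) + (iB * A) * (iF * A))
        = 1 + iB * A - ((iB * A + 1) * iF) * A := by noncomm_ring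
    rw [e2, h2']
    noncomm_ring
  have hDu : IsUnit (iA + iB) := aux_isUnit_of_mul _ _ _ hDE hED
  exact ⟨hDu, by rw [psInv, ← hiA, ← hiB]; exact aux_inverse_eq hDu hDE⟩

include hAsa hA0 hAu hBsa hB0 hBu hFu

lemma psInv_nonneg : 0 ≤ psInv A B := by
  have hDu := (aux_ps_key hAu hBu hFu).1
  have hiA0 : 0 ≤ Ring.inverse A := aux_inverse_nonneg hA0 hAsa hAu
  have hiB0 : 0 ≤ Ring.inverse B := aux_inverse_nonneg hB0 hBsa hBu
  have hD0 : 0 ≤ Ring.inverse A + Ring.inverse B := add_nonneg hiA0 hiB0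
  have hDsa : IsSelfAdjoint (Ring.inverse A + Ring.inverse B) :=
    (aux_inverse_isSelfAdjoint hAsa).add (aux_inverse_isSelfAdjoint hBsa)
  rw [psInv]
  exact aux_inverse_nonneg hD0 hDsa hDu

lemma psInv_le_left : psInv A B ≤ A := by
  have hkey := (aux_ps_key hAu hBu hFu).2
  have hiF0 : 0 ≤ Ring.inverse (A + B) :=
    aux_inverse_nonneg (add_nonneg hA0 hB0) (hAsa.add hBsa) hFu
  have hconj := star_left_conjugate_nonneg hiF0 A
  rw [hAsa.star_eq] at hconj
  have : A - psInv A B = A * Ring.inverse (A + B) * A := by rw [hkey]; noncomm_ring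
  rw [← sub_nonneg, this]
  exact hconj

lemma psInv_eigen {c : ℝ} (hc : 0 < c) {ξ : H}
    (hAx : A ξ = c • ξ) (hBx : B ξ = c • ξ) : psInv A B ξ = (c / 2 : ℝ) • ξ := by
  have hDu := (aux_ps_key hAu hBu hFu).1
  have hiAξ : Ring.inverse A ξ = c⁻¹ • ξ := aux_inv_eigen hAu hc.ne' hAx
  have hiBξ : Ring.inverse B ξ = c⁻¹ • ξ := aux_inv_eigen hBu hc.ne' hBx
  have hDξ : (Ring.inverse A + Ring.inverse B) ξ = (2 * c⁻¹) • ξ := by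
    rw [ContinuousLinearMap.add_apply, hiAξ, hiBξ, ← add_smul]
    congr 1
    ring
  have h2c : (2 * c⁻¹) ≠ 0 := by positivity
  have := aux_inv_eigen hDu h2c hDξ
  rw [psInv, this]
  congr 1
  field_simp

end PS



/-- for orthogonal projections `P, Q` on a complex Hilbert space, the
geometric mean `P # Q` (strong limit of `(P+εI)#(Q+εI)`) equals the orthogonal projection
`P ∧ Q` onto `ran(P) ∩ ran(Q)`, and the harmonic mean `P ! Q = 2(P : Q)` (with `P : Q` the
strong limit of `((P+εI)⁻¹+(Q+εI)⁻¹)⁻¹`) also equals `P ∧ Q`. -/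
theorem proj_geom_and_harmonic_mean (P Q R G S : H →L[ℂ] H)
    (hPsa : IsSelfAdjoint P) (hPidem : IsIdempotentElem P)
    (hQsa : IsSelfAdjoint Q) (hQidem : IsIdempotentElem Q)
    (hRsa : IsSelfAdjoint R) (hRidem : IsIdempotentElem R)
    (hRrange : LinearMap.range (R : H →ₗ[ℂ] H) =
      LinearMap.range (P : H →ₗ[ℂ] H) ⊓ LinearMap.range (Q : H →ₗ[ℂ] H))
    (hG : ∀ ξ : H, Tendsto (fun ε : ℝ => gmInv (P + ε • 1) (Q + ε • 1) ξ)
      (𝓝[>] (0 : ℝ)) (𝓝 (G ξ)))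
    (hS : ∀ ξ : H, Tendsto (fun ε : ℝ => psInv (P + ε • 1) (Q + ε • 1) ξ)
      (𝓝[>] (0 : ℝ)) (𝓝 (S ξ))) :
    G = R ∧ (2 : ℝ) • S = R := by
  -- frequently used scalar limit
  have h1ε : Tendsto (fun ε : ℝ => 1 + ε) (𝓝[>] (0:ℝ)) (𝓝 1) := by
    have h : Tendsto (fun ε : ℝ => 1 + ε) (𝓝 (0:ℝ)) (𝓝 (1 + 0)) :=
      ((continuous_const (y := (1:ℝ))).add continuous_id).tendsto (0:ℝ)
    simp only [add_zero] at h
    exact h.mono_left nhdsWithin_le_nhds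
  have hten : ∀ v : H, Tendsto (fun ε : ℝ => ((1+ε):ℝ) • v) (𝓝[>] (0:ℝ)) (𝓝 v) := by
    intro v
    have := h1ε.smul (tendsto_const_nhds (x := v) (f := 𝓝[>] (0:ℝ)))
    simpa using this
  have htenhalf : ∀ v : H, Tendsto (fun ε : ℝ => (((1+ε)/2):ℝ) • v) (𝓝[>] (0:ℝ))
      (𝓝 (((1:ℝ)/2) • v)) := by
    intro v
    exact (h1ε.div_const 2).smul (tendsto_const_nhds (x := v) (f := 𝓝[>] (0:ℝ)))
  -- shifted operator facts (for ε > 0)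
  have hfixR : ∀ ζ : H, P (R ζ) = R ζ ∧ Q (R ζ) = R ζ := by
    intro ζ
    have hmem : R ζ ∈ LinearMap.range (R : H →ₗ[ℂ] H) := ⟨ζ, rfl⟩
    rw [hRrange] at hmem
    exact ⟨aux_proj_fix hPsa hPidem (Submodule.mem_inf.mp hmem).1,
      aux_proj_fix hQsa hQidem (Submodule.mem_inf.mp hmem).2⟩
  -- eigen computation : G fixes the range of R
  have hGR : ∀ ζ : H, G (R ζ) = R ζ := by
    intro ζ
    obtain ⟨hPξ, hQξ⟩ := hfixR ζ
    set ξ := R ζ with hξdef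
    have hEq : (fun ε : ℝ => ((1+ε):ℝ) • ξ) =ᶠ[𝓝[>] (0:ℝ)]
        (fun ε : ℝ => gmInv (P + ε • 1) (Q + ε • 1) ξ) := by
      filter_upwards [self_mem_nhdsWithin] with ε hε
      have hε' : (0:ℝ) < ε := hε
      have hc : 0 < Real.sqrt (1+ε) := Real.sqrt_pos.mpr (by linarith)
      have hc2 : (Real.sqrt (1+ε)) ^ 2 = 1+ε := Real.sq_sqrt (by linarith)
      have h := gmInv_eigen (aux_shift_sa hPsa) (aux_shift_nonneg hPsa hPidem hε')
        (aux_shift_unit hPsa hPidem hε') (aux_shift_sa hQsa)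
        (aux_shift_nonneg hQsa hQidem hε') (aux_shift_unit hQsa hQidem hε') hc
        (by rw [hc2]; exact aux_shift_eigen hPsa hPidem hε' hPξ)
        (by rw [hc2]; exact aux_shift_eigen hQsa hQidem hε' hQξ)
      rw [h, hc2]
    exact tendsto_nhds_unique (hG ξ) (Tendsto.congr' hEq (hten ξ))
  -- eigen computation : S halves the range of R
  have hSR : ∀ ζ : H, S (R ζ) = ((1:ℝ)/2) • (R ζ) := by
    intro ζ
    obtain ⟨hPξ, hQξ⟩ := hfixR ζ
    set ξ := R ζ with hξdef
    have hEq : (fun ε : ℝ => (((1+ε)/2):ℝ) • ξ) =ᶠ[𝓝[>] (0:ℝ)]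
        (fun ε : ℝ => psInv (P + ε • 1) (Q + ε • 1) ξ) := by
      filter_upwards [self_mem_nhdsWithin] with ε hε
      have hε' : (0:ℝ) < ε := hε
      have hFu : IsUnit ((P + ε • 1) + (Q + ε • 1)) := by
        refine aux_isUnit_of_le hε' (le_trans (aux_shift_lower hPsa hPidem hε') ?_)
        exact le_add_of_nonneg_right (aux_shift_nonneg hQsa hQidem hε')
      have h := psInv_eigen (aux_shift_sa hPsa) (aux_shift_nonneg hPsa hPidem hε')
        (aux_shift_unit hPsa hPidem hε') (aux_shift_sa hQsa)
        (aux_shift_nonneg hQsa hQidem hε') (aux_shift_unit hQsa hQidem hε') hFu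
        (by linarith : (0:ℝ) < 1 + ε)
        (aux_shift_eigen hPsa hPidem hε' hPξ) (aux_shift_eigen hQsa hQidem hε' hQξ)
      rw [h]
    have := tendsto_nhds_unique (hS ξ) (Tendsto.congr' hEq (htenhalf ξ))
    rw [this]
  -- per-ε structural facts
  have hgm_sa : ∀ ε : ℝ, 0 < ε → IsSelfAdjoint (gmInv (P + ε • 1) (Q + ε • 1)) := fun ε hε' =>
    gmInv_isSelfAdjoint (aux_shift_sa hPsa) (aux_shift_nonneg hPsa hPidem hε')
      (aux_shift_unit hPsa hPidem hε') (aux_shift_sa hQsa)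
      (aux_shift_nonneg hQsa hQidem hε') (aux_shift_unit hQsa hQidem hε')
  have hFu : ∀ ε : ℝ, 0 < ε → IsUnit ((P + ε • 1) + (Q + ε • 1)) := fun ε hε' => by
    refine aux_isUnit_of_le hε' (le_trans (aux_shift_lower hPsa hPidem hε') ?_)
    exact le_add_of_nonneg_right (aux_shift_nonneg hQsa hQidem hε')
  have hps_nonneg : ∀ ε : ℝ, 0 < ε → 0 ≤ psInv (P + ε • 1) (Q + ε • 1) := fun ε hε' =>
    psInv_nonneg (aux_shift_sa hPsa) (aux_shift_nonneg hPsa hPidem hε')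
      (aux_shift_unit hPsa hPidem hε') (aux_shift_sa hQsa)
      (aux_shift_nonneg hQsa hQidem hε') (aux_shift_unit hQsa hQidem hε') (hFu ε hε')
  -- selfadjointness of the limits
  have hGsa : IsSelfAdjoint G := by
    rw [ContinuousLinearMap.isSelfAdjoint_iff']
    symm
    rw [ContinuousLinearMap.eq_adjoint_iff]
    intro x y
    have l1 : Tendsto (fun ε : ℝ => ⟪gmInv (P + ε • 1) (Q + ε • 1) x, y⟫) (𝓝[>] (0:ℝ))
        (𝓝 ⟪G x, y⟫) := (hG x).inner tendsto_const_nhds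
    have l2 : Tendsto (fun ε : ℝ => ⟪gmInv (P + ε • 1) (Q + ε • 1) x, y⟫) (𝓝[>] (0:ℝ))
        (𝓝 ⟪x, G y⟫) := by
      refine Tendsto.congr' ?_ (tendsto_const_nhds.inner (hG y))
      filter_upwards [self_mem_nhdsWithin] with ε hε
      exact (aux_sa_inner (hgm_sa ε hε) x y).symm
    exact tendsto_nhds_unique l1 l2
  have hSsa : IsSelfAdjoint S := by
    rw [ContinuousLinearMap.isSelfAdjoint_iff']
    symm
    rw [ContinuousLinearMap.eq_adjoint_iff]
    intro x y
    have l1 : Tendsto (fun ε : ℝ => ⟪psInv (P + ε • 1) (Q + ε • 1) x, y⟫) (𝓝[>] (0:ℝ))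
        (𝓝 ⟪S x, y⟫) := (hS x).inner tendsto_const_nhds
    have l2 : Tendsto (fun ε : ℝ => ⟪psInv (P + ε • 1) (Q + ε • 1) x, y⟫) (𝓝[>] (0:ℝ))
        (𝓝 ⟪x, S y⟫) := by
      refine Tendsto.congr' ?_ (tendsto_const_nhds.inner (hS y))
      filter_upwards [self_mem_nhdsWithin] with ε hε
      exact (aux_sa_inner (aux_nonneg_sa (hps_nonneg ε hε)) x y).symm
    exact tendsto_nhds_unique l1 l2
  -- norm bounds for G
  have hGnormP : ∀ η : H, ‖G η‖ ^ 2 ≤ ‖P η‖ ^ 2 := by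
    intro η
    have hub : (fun ε : ℝ => ‖gmInv (P + ε • 1) (Q + ε • 1) η‖ ^ 2) ≤ᶠ[𝓝[>] (0:ℝ)]
        (fun ε : ℝ => (1+ε) * (‖P η‖ ^ 2 + ε * ‖η‖ ^ 2)) := by
      filter_upwards [self_mem_nhdsWithin] with ε hε
      have hε' : (0:ℝ) < ε := hε
      have h := gmInv_norm_bound_left (aux_shift_sa hPsa) (aux_shift_nonneg hPsa hPidem hε')
        (aux_shift_unit hPsa hPidem hε') (aux_shift_sa hQsa) (aux_shift_nonneg hQsa hQidem hε')
        (aux_shift_unit hQsa hQidem hε') (c := 1+ε) (by linarith)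
        (aux_shift_upper hQsa hQidem hε') η
      rwa [aux_shift_inner hPsa hPidem hε' η] at h
    have hL : Tendsto (fun ε : ℝ => ‖gmInv (P + ε • 1) (Q + ε • 1) η‖ ^ 2) (𝓝[>] (0:ℝ))
        (𝓝 (‖G η‖ ^ 2)) := ((hG η).norm).pow 2
    have hRt : Tendsto (fun ε : ℝ => (1+ε) * (‖P η‖ ^ 2 + ε * ‖η‖ ^ 2)) (𝓝[>] (0:ℝ))
        (𝓝 (‖P η‖ ^ 2)) := by
      have h0 : Tendsto (fun ε : ℝ => (1+ε) * (‖P η‖ ^ 2 + ε * ‖η‖ ^ 2)) (𝓝 (0:ℝ))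
          (𝓝 ((1+0) * (‖P η‖ ^ 2 + 0 * ‖η‖ ^ 2))) :=
        Tendsto.mul (by exact ((continuous_const (y := (1:ℝ))).add continuous_id).tendsto 0)
          (by exact ((continuous_const (y := ‖P η‖ ^ 2)).add
            (continuous_id.mul (continuous_const (y := ‖η‖ ^ 2)))).tendsto 0)
      simp only [add_zero, zero_mul, one_mul] at h0
      exact h0.mono_left nhdsWithin_le_nhds
    exact le_of_tendsto_of_tendsto hL hRt hub
  have hGnormQ : ∀ η : H, ‖G η‖ ^ 2 ≤ ‖Q η‖ ^ 2 := by
    intro η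
    have hub : (fun ε : ℝ => ‖gmInv (P + ε • 1) (Q + ε • 1) η‖ ^ 2) ≤ᶠ[𝓝[>] (0:ℝ)]
        (fun ε : ℝ => (1+ε) * (‖Q η‖ ^ 2 + ε * ‖η‖ ^ 2)) := by
      filter_upwards [self_mem_nhdsWithin] with ε hε
      have hε' : (0:ℝ) < ε := hε
      have h := gmInv_norm_bound_right (aux_shift_sa hPsa) (aux_shift_nonneg hPsa hPidem hε')
        (aux_shift_unit hPsa hPidem hε') (aux_shift_sa hQsa) (aux_shift_nonneg hQsa hQidem hε')
        (aux_shift_unit hQsa hQidem hε') (c := 1+ε) (by linarith)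
        (aux_shift_upper hPsa hPidem hε') η
      rwa [aux_shift_inner hQsa hQidem hε' η] at h
    have hL : Tendsto (fun ε : ℝ => ‖gmInv (P + ε • 1) (Q + ε • 1) η‖ ^ 2) (𝓝[>] (0:ℝ))
        (𝓝 (‖G η‖ ^ 2)) := ((hG η).norm).pow 2
    have hRt : Tendsto (fun ε : ℝ => (1+ε) * (‖Q η‖ ^ 2 + ε * ‖η‖ ^ 2)) (𝓝[>] (0:ℝ))
        (𝓝 (‖Q η‖ ^ 2)) := by
      have h0 : Tendsto (fun ε : ℝ => (1+ε) * (‖Q η‖ ^ 2 + ε * ‖η‖ ^ 2)) (𝓝 (0:ℝ))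
          (𝓝 ((1+0) * (‖Q η‖ ^ 2 + 0 * ‖η‖ ^ 2))) :=
        Tendsto.mul (by exact ((continuous_const (y := (1:ℝ))).add continuous_id).tendsto 0)
          (by exact ((continuous_const (y := ‖Q η‖ ^ 2)).add
            (continuous_id.mul (continuous_const (y := ‖η‖ ^ 2)))).tendsto 0)
      simp only [add_zero, zero_mul, one_mul] at h0
      exact h0.mono_left nhdsWithin_le_nhds
    exact le_of_tendsto_of_tendsto hL hRt hub
  -- inner bounds for S
  have hre_tendsto : ∀ η : H, Tendsto (fun ε : ℝ => rre ⟪psInv (P + ε • 1) (Q + ε • 1) η, η⟫)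
      (𝓝[>] (0:ℝ)) (𝓝 (rre ⟪S η, η⟫)) := fun η =>
    (RCLike.continuous_re.tendsto _).comp ((hS η).inner tendsto_const_nhds)
  have hSinnerP : ∀ η : H, rre ⟪S η, η⟫ ≤ ‖P η‖ ^ 2 := by
    intro η
    have hub : (fun ε : ℝ => rre ⟪psInv (P + ε • 1) (Q + ε • 1) η, η⟫) ≤ᶠ[𝓝[>] (0:ℝ)]
        (fun ε : ℝ => ‖P η‖ ^ 2 + ε * ‖η‖ ^ 2) := by
      filter_upwards [self_mem_nhdsWithin] with ε hε
      have hε' : (0:ℝ) < ε := hε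
      have hle := psInv_le_left (aux_shift_sa hPsa) (aux_shift_nonneg hPsa hPidem hε')
        (aux_shift_unit hPsa hPidem hε') (aux_shift_sa hQsa)
        (aux_shift_nonneg hQsa hQidem hε') (aux_shift_unit hQsa hQidem hε') (hFu ε hε')
      have h := aux_le_inner hle η
      rwa [aux_shift_inner hPsa hPidem hε' η] at h
    have hRt : Tendsto (fun ε : ℝ => ‖P η‖ ^ 2 + ε * ‖η‖ ^ 2) (𝓝[>] (0:ℝ))
        (𝓝 (‖P η‖ ^ 2)) := by
      have h0 : Tendsto (fun ε : ℝ => ‖P η‖ ^ 2 + ε * ‖η‖ ^ 2) (𝓝 (0:ℝ))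
          (𝓝 (‖P η‖ ^ 2 + 0 * ‖η‖ ^ 2)) :=
        (by exact ((continuous_const (y := ‖P η‖ ^ 2)).add
          (continuous_id.mul (continuous_const (y := ‖η‖ ^ 2)))).tendsto 0)
      simp only [zero_mul, add_zero] at h0
      exact h0.mono_left nhdsWithin_le_nhds
    exact le_of_tendsto_of_tendsto (hre_tendsto η) hRt hub
  have hSinnerQ : ∀ η : H, rre ⟪S η, η⟫ ≤ ‖Q η‖ ^ 2 := by
    intro η
    have hub : (fun ε : ℝ => rre ⟪psInv (P + ε • 1) (Q + ε • 1) η, η⟫) ≤ᶠ[𝓝[>] (0:ℝ)]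
        (fun ε : ℝ => ‖Q η‖ ^ 2 + ε * ‖η‖ ^ 2) := by
      filter_upwards [self_mem_nhdsWithin] with ε hε
      have hε' : (0:ℝ) < ε := hε
      have hFu' : IsUnit ((Q + ε • 1) + (P + ε • 1)) := by
        rw [add_comm]; exact hFu ε hε'
      have hle := psInv_le_left (aux_shift_sa hQsa) (aux_shift_nonneg hQsa hQidem hε')
        (aux_shift_unit hQsa hQidem hε') (aux_shift_sa hPsa)
        (aux_shift_nonneg hPsa hPidem hε') (aux_shift_unit hPsa hPidem hε') hFu'
      have hcomm : psInv (P + ε • 1) (Q + ε • 1) = psInv (Q + ε • 1) (P + ε • 1) := by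
        rw [psInv, psInv, add_comm]
      rw [hcomm]
      have h := aux_le_inner hle η
      rwa [aux_shift_inner hQsa hQidem hε' η] at h
    have hRt : Tendsto (fun ε : ℝ => ‖Q η‖ ^ 2 + ε * ‖η‖ ^ 2) (𝓝[>] (0:ℝ))
        (𝓝 (‖Q η‖ ^ 2)) := by
      have h0 : Tendsto (fun ε : ℝ => ‖Q η‖ ^ 2 + ε * ‖η‖ ^ 2) (𝓝 (0:ℝ))
          (𝓝 (‖Q η‖ ^ 2 + 0 * ‖η‖ ^ 2)) :=
        (by exact ((continuous_const (y := ‖Q η‖ ^ 2)).add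
          (continuous_id.mul (continuous_const (y := ‖η‖ ^ 2)))).tendsto 0)
      simp only [zero_mul, add_zero] at h0
      exact h0.mono_left nhdsWithin_le_nhds
    exact le_of_tendsto_of_tendsto (hre_tendsto η) hRt hub
  have hSpos : 0 ≤ S := by
    rw [ContinuousLinearMap.nonneg_iff_isPositive, ContinuousLinearMap.isPositive_def']
    refine ⟨hSsa, fun η => ?_⟩
    have hub : (fun _ : ℝ => (0:ℝ)) ≤ᶠ[𝓝[>] (0:ℝ)]
        (fun ε : ℝ => rre ⟪psInv (P + ε • 1) (Q + ε • 1) η, η⟫) := by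
      filter_upwards [self_mem_nhdsWithin] with ε hε
      exact aux_nonneg_inner (hps_nonneg ε hε) η
    exact le_of_tendsto_of_tendsto tendsto_const_nhds (hre_tendsto η) hub
  -- pointwise kernel facts
  have hPker : ∀ ζ : H, P (ζ - P ζ) = 0 := by
    intro ζ
    have h : P (P ζ) = P ζ := by rw [← ContinuousLinearMap.mul_apply, hPidem.eq]
    rw [map_sub, h, sub_self]
  have hQker : ∀ ζ : H, Q (ζ - Q ζ) = 0 := by
    intro ζ
    have h : Q (Q ζ) = Q ζ := by rw [← ContinuousLinearMap.mul_apply, hQidem.eq]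
    rw [map_sub, h, sub_self]
  -- star-flip helpers
  have hflip : ∀ (T U : H →L[ℂ] H), IsSelfAdjoint T → IsSelfAdjoint U → T * U = T →
      U * T = T := by
    intro T U hT hU h
    calc U * T = star U * star T := by rw [hT.star_eq, hU.star_eq]
    _ = star (T * U) := (star_mul _ _).symm
    _ = star T := by rw [h]
    _ = T := hT.star_eq
  have hflip' : ∀ (T U : H →L[ℂ] H), IsSelfAdjoint T → IsSelfAdjoint U → U * T = T →
      T * U = T := by
    intro T U hT hU h
    calc T * U = star T * star U := by rw [hT.star_eq, hU.star_eq]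
    _ = star (U * T) := (star_mul _ _).symm
    _ = star T := by rw [h]
    _ = T := hT.star_eq
  -- G absorbs P and Q
  have hGPop : G * P = G := by
    ext ζ
    have h := hGnormP (ζ - P ζ)
    rw [hPker ζ, norm_zero] at h
    have h0 : G (ζ - P ζ) = 0 := by
      have hn : ‖G (ζ - P ζ)‖ = 0 := by nlinarith [norm_nonneg (G (ζ - P ζ))]
      exact norm_eq_zero.mp hn
    rw [map_sub, sub_eq_zero] at h0
    rw [ContinuousLinearMap.mul_apply]
    exact h0.symm
  have hGQop : G * Q = G := by
    ext ζ
    have h := hGnormQ (ζ - Q ζ)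
    rw [hQker ζ, norm_zero] at h
    have h0 : G (ζ - Q ζ) = 0 := by
      have hn : ‖G (ζ - Q ζ)‖ = 0 := by nlinarith [norm_nonneg (G (ζ - Q ζ))]
      exact norm_eq_zero.mp hn
    rw [map_sub, sub_eq_zero] at h0
    rw [ContinuousLinearMap.mul_apply]
    exact h0.symm
  have hSPop : S * P = S := by
    ext ζ
    have h := hSinnerP (ζ - P ζ)
    rw [hPker ζ, norm_zero] at h
    have h00 : rre ⟪S (ζ - P ζ), ζ - P ζ⟫ = 0 := by
      have := hSpos
      have h01 := aux_nonneg_inner hSpos (ζ - P ζ)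
      nlinarith
    have h0 : S (ζ - P ζ) = 0 := aux_null hSpos h00
    rw [map_sub, sub_eq_zero] at h0
    rw [ContinuousLinearMap.mul_apply]
    exact h0.symm
  have hSQop : S * Q = S := by
    ext ζ
    have h := hSinnerQ (ζ - Q ζ)
    rw [hQker ζ, norm_zero] at h
    have h00 : rre ⟪S (ζ - Q ζ), ζ - Q ζ⟫ = 0 := by
      have h01 := aux_nonneg_inner hSpos (ζ - Q ζ)
      nlinarith
    have h0 : S (ζ - Q ζ) = 0 := aux_null hSpos h00
    rw [map_sub, sub_eq_zero] at h0
    rw [ContinuousLinearMap.mul_apply]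
    exact h0.symm
  -- ranges
  have hRabsorb : ∀ (T : H →L[ℂ] H), IsSelfAdjoint T → T * P = T → T * Q = T →
      T * R = T := by
    intro T hTsa hTP hTQ
    have hPT : P * T = T := hflip T P hTsa hPsa hTP
    have hQT : Q * T = T := hflip T Q hTsa hQsa hTQ
    have hRT : R * T = T := by
      ext ζ
      have hPmem : T ζ ∈ LinearMap.range (P : H →ₗ[ℂ] H) := by
        refine ⟨T ζ, ?_⟩
        have := congrFun (congrArg DFunLike.coe hPT) ζ
        exact this
      have hQmem : T ζ ∈ LinearMap.range (Q : H →ₗ[ℂ] H) := by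
        refine ⟨T ζ, ?_⟩
        have := congrFun (congrArg DFunLike.coe hQT) ζ
        exact this
      have hmem : T ζ ∈ LinearMap.range (R : H →ₗ[ℂ] H) := by
        rw [hRrange]
        exact Submodule.mem_inf.mpr ⟨hPmem, hQmem⟩
      rw [ContinuousLinearMap.mul_apply]
      exact aux_proj_fix hRsa hRidem hmem
    exact hflip' T R hTsa hRsa hRT
  have hGRop : G * R = G := hRabsorb G hGsa hGPop hGQop
  have hSRop : S * R = S := hRabsorb S hSsa hSPop hSQop
  constructor
  · -- G = R
    have hGRop2 : G * R = R := by
      ext ζ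
      rw [ContinuousLinearMap.mul_apply]
      exact hGR ζ
    rw [← hGRop, hGRop2]
  · -- 2 S = R
    ext ζ
    have h1 : S ζ = ((1:ℝ)/2) • (R ζ) := by
      have h2 : S (R ζ) = S ζ := by
        have := congrFun (congrArg DFunLike.coe hSRop) ζ
        exact this
      rw [← h2, hSR ζ]
    rw [ContinuousLinearMap.smul_apply, h1, smul_smul]
    norm_num
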